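/- For any distinct i, j ∈ I, the sets X_{L_{ij}} = {{i,j},{i,i∗j},{j,i∗j}}, X_{L_{ij}}^C = { {i',j'} ∈ X : i',j' ∉ {i,j,i∗j} }, X_{(i)} = { {i,ℓ} : ℓ ∈ I, ℓ ≠ i }, X^{(i)} = { {i',j'} ∈ X : i'∗j' = i }, and all their subsets, are nice sets. -/

import Mathlib

abbrev GG : Type := ZMod 2 × ZMod 2 × ZMod 2

def X : Finset (Sym2 GG) :=
  ((Finset.univ : Finset (GG × GG)).filter
    fun q => q.1 ≠ q.2 ∧ q.1 ≠ 0 ∧ q.2 ≠ 0).image fun q => s(q.1, q.2)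

def Generative (a b c : GG) : Prop :=
  a ≠ 0 ∧ b ≠ 0 ∧ c ≠ 0 ∧ a ≠ b ∧ a ≠ c ∧ b ≠ c ∧ c ≠ a + b

def Pset (a b c : GG) : Finset (Sym2 GG) :=
  {s(a, b), s(b, c), s(c, a), s(a, b + c), s(b, c + a), s(c, a + b)}

def IsNice (T : Finset (Sym2 GG)) : Prop :=
  T ⊆ X ∧ ∀ a b c : GG, Generative a b c →
    s(a, b) ∈ T → s(a + b, c) ∈ T → Pset a b c ⊆ T

/-- `X_{L_{ij}}`: the three edges within the line `{i, j, i∗j}`. -/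
def XL (i j : GG) : Finset (Sym2 GG) := {s(i, j), s(i, i + j), s(j, i + j)}

/-- `X_{L_{ij}}^C`: edges disjoint from the line `{i, j, i∗j}`. -/
def XLC (i j : GG) : Finset (Sym2 GG) :=
  X.filter fun p => ∀ x ∈ p, x ≠ i ∧ x ≠ j ∧ x ≠ i + j

/-- `X_{(i)}`: edges through the point `i`. -/
def Xpoint (i : GG) : Finset (Sym2 GG) := X.filter fun p => i ∈ p

/-- `X^{(i)}`: edges `{i', j'}` with `i'∗j' = i`. -/
def Xstar (i : GG) : Finset (Sym2 GG) :=
  X.filter fun p => Sym2.lift ⟨fun a b => a + b, fun a b => add_comm a b⟩ p = i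

lemma mem_X (x y : GG) (hxy : x ≠ y) (hx : x ≠ 0) (hy : y ≠ 0) : s(x, y) ∈ X := by
  refine Finset.mem_image.2 ⟨(x, y), ?_, rfl⟩
  simp [hxy, hx, hy]

lemma add_ne_zero_gg : ∀ i j : GG, i ≠ j → i + j ≠ 0 := by decide

lemma ne_add_left_gg : ∀ i j : GG, j ≠ 0 → i ≠ i + j := by decide

lemma mem_line_of_mem_XL {i j : GG} {p : Sym2 GG} (hp : p ∈ XL i j) :
    ∀ x ∈ p, x = i ∨ x = j ∨ x = i + j := by
  simp only [XL, Finset.mem_insert, Finset.mem_singleton] at hp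
  rcases hp with h | h | h <;> subst h <;> intro x hx <;> rw [Sym2.mem_iff] at hx <;> tauto

set_option synthInstance.maxSize 4096 in
set_option synthInstance.maxHeartbeats 4000000 in
set_option maxHeartbeats 4000000 in
lemma xl_vac : ∀ i j a b c : GG, i ≠ 0 → j ≠ 0 → i ≠ j →
    a ≠ 0 → b ≠ 0 → c ≠ 0 → a ≠ b → a ≠ c → b ≠ c → c ≠ a + b →
    (a = i ∨ a = j ∨ a = i + j) → (b = i ∨ b = j ∨ b = i + j) →
    (a + b = i ∨ a + b = j ∨ a + b = i + j) → (c = i ∨ c = j ∨ c = i + j) → False := by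
  decide

set_option synthInstance.maxSize 1024 in
set_option synthInstance.maxHeartbeats 1000000 in
set_option maxHeartbeats 2000000 in
lemma xlc_vac : ∀ i j a b : GG, i ≠ 0 → j ≠ 0 → i ≠ j → a ≠ 0 → b ≠ 0 → a ≠ b →
    (a ≠ i ∧ a ≠ j ∧ a ≠ i + j) → (b ≠ i ∧ b ≠ j ∧ b ≠ i + j) →
    (a + b ≠ i ∧ a + b ≠ j ∧ a + b ≠ i + j) → False := by
  decide

/-- `X_{L_{ij}}`, `X_{L_{ij}}^C`, `X_{(i)}`, `X^{(i)}` and all their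
subsets are nice sets. -/
theorem special_subsets_isNice (i j : GG) (hi : i ≠ 0) (hj : j ≠ 0) (hij : i ≠ j)
    (T : Finset (Sym2 GG))
    (hT : T ⊆ XL i j ∨ T ⊆ XLC i j ∨ T ⊆ Xpoint i ∨ T ⊆ Xstar i) :
    IsNice T := by
  rcases hT with hT | hT | hT | hT
  · constructor
    · refine hT.trans fun p hp => ?_
      simp only [XL, Finset.mem_insert, Finset.mem_singleton] at hp
      rcases hp with h | h | h <;> subst h
      · exact mem_X i j hij hi hj
      · exact mem_X i (i + j) (ne_add_left_gg i j hj) hi (add_ne_zero_gg i j hij)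
      · exact mem_X j (i + j) (by rw [add_comm]; exact ne_add_left_gg j i hi) hj
          (add_ne_zero_gg i j hij)
    · rintro a b c ⟨ha, hb, hc, hab, hac, hbc, hcab⟩ h1 h2
      have m1 := mem_line_of_mem_XL (hT h1)
      have m2 := mem_line_of_mem_XL (hT h2)
      exact absurd (xl_vac i j a b c hi hj hij ha hb hc hab hac hbc hcab
        (m1 a (Sym2.mem_mk_left a b)) (m1 b (Sym2.mem_mk_right a b))
        (m2 (a + b) (Sym2.mem_mk_left _ c)) (m2 c (Sym2.mem_mk_right _ c))) (fun h => h)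
  · constructor
    · exact hT.trans (Finset.filter_subset _ _)
    · rintro a b c ⟨ha, hb, hc, hab, hac, hbc, hcab⟩ h1 h2
      have m1 := (Finset.mem_filter.1 (hT h1)).2
      have m2 := (Finset.mem_filter.1 (hT h2)).2
      exact absurd (xlc_vac i j a b hi hj hij ha hb hab (m1 a (Sym2.mem_mk_left a b))
        (m1 b (Sym2.mem_mk_right a b)) (m2 (a + b) (Sym2.mem_mk_left _ c))) (fun h => h)
  · constructor
    · exact hT.trans (Finset.filter_subset _ _)
    · rintro a b c ⟨ha, hb, hc, hab, hac, hbc, hcab⟩ h1 h2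
      have m1 := (Finset.mem_filter.1 (hT h1)).2
      have m2 := (Finset.mem_filter.1 (hT h2)).2
      rw [Sym2.mem_iff] at m1 m2
      rcases m1 with h | h <;> rcases m2 with h' | h'
      · exact absurd (by rwa [← h, left_eq_add] at h') hb
      · exact absurd (h.symm.trans h') hac
      · exact absurd (by
          have : b = a + b := h.symm.trans h'
          rwa [right_eq_add] at this) ha
      · exact absurd (h.symm.trans h') hbc
  · constructor
    · exact hT.trans (Finset.filter_subset _ _)
    · rintro a b c ⟨ha, hb, hc, hab, hac, hbc, hcab⟩ h1 h2
      have m1 := (Finset.mem_filter.1 (hT h1)).2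
      have m2 := (Finset.mem_filter.1 (hT h2)).2
      simp only [Sym2.lift_mk] at m1 m2
      exact absurd (by rwa [m1, add_eq_left] at m2) hc
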